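/- Let G be a graph, let H be a finite graph, and let K be a positive integer. If the power graph G^K contains H as a 3-fat minor, then G contains H as a K-fat minor. -/

import Mathlib

open SimpleGraph

/-- The distance between two vertex sets `X` and `Y` in a graph `G` is at least `K`
(measured with the extended graph distance, so unreachable pairs are at infinite distance). -/
def SimpleGraph.SetDistGE {V : Type*} (G : SimpleGraph V) (X Y : Set V) (K : ℕ) : Prop :=
  ∀ x ∈ X, ∀ y ∈ Y, (K : ℕ∞) ≤ G.edist x y

/-- `B, P` form a `K`-fat minor model of `H` in `G`: branch sets `B v` and edge paths `P e`
induce connected subgraphs, incident pairs intersect, and all other pairs of sets in the model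
are at distance at least `K`. -/
def SimpleGraph.IsFatMinorModel {V W : Type*} (G : SimpleGraph V) (H : SimpleGraph W) (K : ℕ)
    (B : W → Set V) (P : H.edgeSet → Set V) : Prop :=
  (∀ w, (G.induce (B w)).Connected) ∧
  (∀ e, (G.induce (P e)).Connected) ∧
  (∀ (w : W) (e : H.edgeSet), w ∈ (e : Sym2 W) → (B w ∩ P e).Nonempty) ∧
  (∀ w w' : W, w ≠ w' → G.SetDistGE (B w) (B w') K) ∧
  (∀ e e' : H.edgeSet, e ≠ e' → G.SetDistGE (P e) (P e') K) ∧
  (∀ (w : W) (e : H.edgeSet), w ∉ (e : Sym2 W) → G.SetDistGE (B w) (P e) K)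

/-- `G` contains `H` as a `K`-fat minor. -/
def SimpleGraph.HasFatMinor {V W : Type*} (G : SimpleGraph V) (H : SimpleGraph W) (K : ℕ) : Prop :=
  ∃ B P, G.IsFatMinorModel H K B P

/-- The `K`-th power of a graph `G`: distinct vertices are adjacent iff their distance
in `G` is at most `K`. -/
def SimpleGraph.powerGraph {V : Type*} (G : SimpleGraph V) (K : ℕ) : SimpleGraph V where
  Adj u v := u ≠ v ∧ G.edist u v ≤ K
  symm := ⟨fun u v ⟨h, hd⟩ => ⟨h.symm, by rwa [SimpleGraph.edist_comm]⟩⟩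
  loopless := ⟨fun u ⟨h, _⟩ => h rfl⟩

section Aux

variable {V : Type*} {G : SimpleGraph V} {K : ℕ} {S : Set V}

/-- The `K`-fattening of a set: all vertices on walks of length at most `K`
between two vertices of `S`. -/
def fatSet (G : SimpleGraph V) (K : ℕ) (S : Set V) : Set V :=
  {x | ∃ u ∈ S, ∃ v ∈ S, ∃ p : G.Walk u v, p.length ≤ K ∧ x ∈ p.support}

lemma subset_fatSet : S ⊆ fatSet G K S :=
  fun x hx => ⟨x, hx, x, hx, Walk.nil, by simp⟩

lemma fatSet_near {x : V} (hx : x ∈ fatSet G K S) :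
    ∃ s ∈ S, G.edist s x ≤ (K / 2 : ℕ) := by
  obtain ⟨u, hu, v, hv, p, hlen, hsupp⟩ := hx
  obtain ⟨q, r, rfl⟩ := Walk.mem_support_iff_exists_append.mp hsupp
  have hsum : q.length + r.length ≤ K := by
    rw [← Walk.length_append]; exact hlen
  by_cases hq : q.length ≤ K / 2
  · exact ⟨u, hu, le_trans q.edist_le (by exact_mod_cast hq)⟩
  · refine ⟨v, hv, ?_⟩
    rw [G.edist_comm]
    exact le_trans r.edist_le (by exact_mod_cast (by omega : r.length ≤ K / 2))

lemma power_edist_le_one {u v : V} (h : G.edist u v ≤ K) :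
    (G.powerGraph K).edist u v ≤ 1 := by
  rcases eq_or_ne u v with rfl | hne
  · simp
  · have hadj : (G.powerGraph K).Adj u v := show u ≠ v ∧ G.edist u v ≤ K from ⟨hne, h⟩
    exact le_trans hadj.toWalk.edist_le (by simp)

lemma walk_split : ∀ (n : ℕ) {u v : V} (p : G.Walk u v), n ≤ p.length →
    ∃ (m : V) (q : G.Walk u m) (r : G.Walk m v), q.length = n ∧ q.length + r.length = p.length
  | 0, u, v, p, _ => ⟨u, Walk.nil, p, rfl, by simp⟩
  | (n + 1), u, v, p, hn => by
    cases p with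
    | nil => simp at hn
    | cons h p' =>
      obtain ⟨m, q, r, hq, hqr⟩ := walk_split n p' (by simpa [Walk.length_cons] using hn)
      exact ⟨m, Walk.cons h q, r, by simp [hq], by simp [Walk.length_cons]; omega⟩

lemma power_edist_le_two {u v : V} (h : G.edist u v ≤ (2 * K : ℕ)) :
    (G.powerGraph K).edist u v ≤ 2 := by
  have hne : G.edist u v ≠ ⊤ := fun ht => by
    rw [ht, top_le_iff] at h; exact ENat.coe_ne_top (2 * K) h
  obtain ⟨p, hp⟩ := SimpleGraph.exists_walk_of_edist_ne_top hne
  have hlen : p.length ≤ 2 * K := by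
    have : (p.length : ℕ∞) ≤ (2 * K : ℕ) := hp ▸ h
    exact_mod_cast this
  by_cases hle : p.length ≤ K
  · have h1 : (G.powerGraph K).edist u v ≤ 1 :=
      power_edist_le_one (le_trans p.edist_le (by exact_mod_cast hle))
    exact le_trans h1 (by norm_num)
  · obtain ⟨m, q, r, hq, hqr⟩ := walk_split K p (le_of_not_ge hle)
    have h1 : (G.powerGraph K).edist u m ≤ 1 :=
      power_edist_le_one (le_trans q.edist_le (by exact_mod_cast hq.le))
    have h2 : (G.powerGraph K).edist m v ≤ 1 :=
      power_edist_le_one (le_trans r.edist_le (by exact_mod_cast (by omega : r.length ≤ K)))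
    calc (G.powerGraph K).edist u v
        ≤ (G.powerGraph K).edist u m + (G.powerGraph K).edist m v :=
          SimpleGraph.edist_triangle
      _ ≤ 1 + 1 := add_le_add h1 h2
      _ = 2 := by norm_num

lemma reachable_induce_of_walk {s : Set V} {u v : V}
    (p : G.Walk u v) (hp : ∀ x ∈ p.support, x ∈ s) (hu : u ∈ s) (hv : v ∈ s) :
    (G.induce s).Reachable ⟨u, hu⟩ ⟨v, hv⟩ := by
  rw [induce_eq_coe_induce_top]
  have hle : p.toSubgraph ≤ (⊤ : G.Subgraph).induce s :=
    le_trans p.toSubgraph_le_induce_support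
      (Subgraph.induce_mono_right (fun x hx => hp x hx))
  have hreach := p.toSubgraph_connected ⟨u, p.start_mem_verts_toSubgraph⟩
    ⟨v, p.end_mem_verts_toSubgraph⟩
  exact hreach.map (Subgraph.inclusion hle)

lemma fatSet_support_subset {u v : V} {p : G.Walk u v} (hu : u ∈ S) (hv : v ∈ S)
    (hlen : p.length ≤ K) : ∀ x ∈ p.support, x ∈ fatSet G K S :=
  fun x hx => ⟨u, hu, v, hv, p, hlen, hx⟩

lemma fatSet_reach_base {x : V} (hx : x ∈ fatSet G K S) :
    ∃ u, ∃ hu : u ∈ S,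
      (G.induce (fatSet G K S)).Reachable ⟨x, hx⟩ ⟨u, subset_fatSet hu⟩ := by
  obtain ⟨u, hu, v, hv, p, hlen, hsupp⟩ := hx
  obtain ⟨q, r, hqr⟩ := Walk.mem_support_iff_exists_append.mp hsupp
  refine ⟨u, hu, ?_⟩
  have hq : ∀ z ∈ q.support, z ∈ fatSet G K S := fun z hz =>
    fatSet_support_subset hu hv hlen z (hqr ▸ Walk.subset_support_append_left _ _ hz)
  exact (reachable_induce_of_walk q hq (subset_fatSet hu) _).symm

lemma fatSet_reach_of_base : ∀ {a b : {x // x ∈ S}}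
    (_ : ((G.powerGraph K).induce S).Walk a b),
    (G.induce (fatSet G K S)).Reachable ⟨a.1, subset_fatSet a.2⟩ ⟨b.1, subset_fatSet b.2⟩
  | _, _, Walk.nil => Reachable.refl _
  | a, b, Walk.cons h w => by
    rename_i c
    have hadj : (G.powerGraph K).Adj a.1 c.1 := by simpa using h
    have hne : G.edist a.1 c.1 ≠ ⊤ := fun ht => by
      have := (show a.1 ≠ c.1 ∧ G.edist a.1 c.1 ≤ K from hadj).2; simp [ht] at this
    obtain ⟨p, hp⟩ := SimpleGraph.exists_walk_of_edist_ne_top hne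
    have hlen : p.length ≤ K := by
      have : (p.length : ℕ∞) ≤ (K : ℕ) := hp ▸ (show a.1 ≠ c.1 ∧ G.edist a.1 c.1 ≤ K from hadj).2
      exact_mod_cast this
    exact (reachable_induce_of_walk p (fatSet_support_subset a.2 c.2 hlen) _ _).trans
      (fatSet_reach_of_base w)

lemma fatSet_connected (hS : ((G.powerGraph K).induce S).Connected) :
    (G.induce (fatSet G K S)).Connected := by
  rw [connected_iff]
  constructor
  · rintro ⟨x, hx⟩ ⟨y, hy⟩
    obtain ⟨u, hu, hxu⟩ := fatSet_reach_base hx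
    obtain ⟨u', hu', hyu'⟩ := fatSet_reach_base hy
    obtain ⟨w⟩ := hS.preconnected ⟨u, hu⟩ ⟨u', hu'⟩
    exact (hxu.trans (fatSet_reach_of_base w)).trans hyu'.symm
  · obtain ⟨⟨u, hu⟩⟩ := hS.nonempty
    exact ⟨⟨u, subset_fatSet hu⟩⟩

lemma fat_setDistGE {X Y : Set V} (hK : 0 < K)
    (hXY : (G.powerGraph K).SetDistGE X Y 3) :
    G.SetDistGE (fatSet G K X) (fatSet G K Y) K := by
  intro x hx y hy
  by_contra hlt
  push_neg at hlt
  have hne : G.edist x y ≠ ⊤ := ne_top_of_lt (lt_of_lt_of_le hlt le_top)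
  set d := (G.edist x y).toNat with hd
  have hdd : G.edist x y = (d : ℕ∞) := (ENat.coe_toNat hne).symm
  have hdK : d < K := by
    rw [hdd] at hlt; exact_mod_cast hlt
  obtain ⟨s, hs, hsx⟩ := fatSet_near hx
  obtain ⟨t, ht, hty⟩ := fatSet_near hy
  have htri : G.edist s t ≤ G.edist s x + (G.edist x y + G.edist y t) :=
    le_trans SimpleGraph.edist_triangle
      (add_le_add le_rfl SimpleGraph.edist_triangle)
  have hyt : G.edist y t ≤ (K / 2 : ℕ) := by rwa [G.edist_comm]
  have hst : G.edist s t ≤ ((K / 2 + (d + K / 2) : ℕ) : ℕ∞) := by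
    refine le_trans htri ?_
    push_cast
    exact add_le_add hsx (add_le_add (le_of_eq hdd) hyt)
  have hst2 : G.edist s t ≤ ((2 * K : ℕ) : ℕ∞) :=
    le_trans hst (by exact_mod_cast (by omega : K / 2 + (d + K / 2) ≤ 2 * K))
  have h2 : (G.powerGraph K).edist s t ≤ 2 := power_edist_le_two hst2
  have h3 : ((3 : ℕ) : ℕ∞) ≤ (G.powerGraph K).edist s t := hXY s hs t ht
  have : ((3 : ℕ) : ℕ∞) ≤ 2 := le_trans h3 h2
  norm_num at this

end Aux

/-- If the power graph `G^K` contains a finite graph `H` as a `3`-fat minor, then `G`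
contains `H` as a `K`-fat minor. -/
theorem hasFatMinor_of_powerGraph_hasFatMinor {V W : Type*} [Fintype W]
    (G : SimpleGraph V) (H : SimpleGraph W) (K : ℕ) (hK : 0 < K)
    (h : (G.powerGraph K).HasFatMinor H 3) :
    G.HasFatMinor H K := by
  obtain ⟨B, P, hBconn, hPconn, hInt, hBB, hPP, hBP⟩ := h
  refine ⟨fun w => fatSet G K (B w), fun e => fatSet G K (P e),
    fun w => fatSet_connected (hBconn w),
    fun e => fatSet_connected (hPconn e),
    fun w e hwe => ?_,
    fun w w' hne => fat_setDistGE hK (hBB w w' hne),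
    fun e e' hne => fat_setDistGE hK (hPP e e' hne),
    fun w e hwe => fat_setDistGE hK (hBP w e hwe)⟩
  exact (hInt w e hwe).mono (Set.inter_subset_inter subset_fatSet subset_fatSet)
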